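/- Let ρ: (0,∞)→[0,∞) be measurable with ∫_0^∞ min(1,s) ρ(s) ds < ∞ and ∫_0^∞ ρ(s) ds = +∞, and let κ > 0. Fix an integer k ≥ 1 and positive integers n_1,…,n_k with n = n_1+⋯+n_k. For ε > 0 and u > 0 define f_ε(u) = (u^{n−1}/Γ(n)) · ((k+Λ_{ε,u})/Λ_ε) · exp(Λ_{ε,u} − Λ_ε) · ∏_{i=1}^k κ ∫_ε^∞ s^{n_i} e^{−u s} ρ(s) ds, and define f_0(u) = (u^{n−1}/Γ(n)) · exp( κ ∫_0^∞ (e^{−u s} − 1) ρ(s) ds ) · ∏_{i=1}^k κ ∫_0^∞ s^{n_i} e^{−u s} ρ(s) ds. Then for every u > 0, lim_{ε→0+} f_ε(u) = f_0(u). -/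

import Mathlib

open MeasureTheory Filter Topology Set

lemma aux_tendsto_Ioi {f : ℝ → ℝ} (hf : IntegrableOn f (Ioi 0)) :
    Tendsto (fun ε : ℝ => ∫ s in Ioi ε, f s) (𝓝[>] (0:ℝ))
      (𝓝 (∫ s in Ioi (0:ℝ), f s)) := by
  have h := tendsto_integral_filter_of_dominated_convergence
      (μ := volume.restrict (Ioi (0:ℝ))) (l := 𝓝[>] (0:ℝ))
      (F := fun ε : ℝ => (Ioi ε).indicator f) (f := f)
      (bound := fun s => ‖f s‖)
      (Eventually.of_forall fun ε => hf.aestronglyMeasurable.indicator measurableSet_Ioi)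
      (Eventually.of_forall fun ε =>
        Eventually.of_forall fun s => norm_indicator_le_norm_self f s)
      hf.norm ?_
  · refine Tendsto.congr' ?_ h
    filter_upwards [self_mem_nhdsWithin] with ε (hε : (0:ℝ) < ε)
    rw [setIntegral_indicator measurableSet_Ioi, Ioi_inter_Ioi, max_eq_right hε.le]
  · filter_upwards [self_mem_ae_restrict measurableSet_Ioi] with a (ha : (0:ℝ) < a)
    refine Tendsto.congr' ?_ tendsto_const_nhds
    filter_upwards [nhdsWithin_le_nhds (Iio_mem_nhds ha)] with ε (hε : ε < a)
    simp [indicator_of_mem, hε]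

lemma aux_pow_exp_bound {u : ℝ} (hu : 0 < u) {m : ℕ} (hm : 1 ≤ m) {s : ℝ} (hs : 0 < s) :
    s ^ m * Real.exp (-u * s) ≤
      max 1 ((m+1).factorial / u ^ (m+1)) * min 1 s := by
  rcases le_total s 1 with h1 | h1
  · rw [min_eq_right h1]
    calc s ^ m * Real.exp (-u * s) ≤ s ^ m * 1 := by
          gcongr
          exact Real.exp_le_one_iff.2 (by nlinarith)
      _ = s ^ m := mul_one _
      _ ≤ s := pow_le_of_le_one hs.le h1 (by omega)
      _ ≤ max 1 ((m+1).factorial / u ^ (m+1)) * s := by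
          nlinarith [le_max_left (1:ℝ) ((m+1).factorial / u ^ (m+1))]
  · rw [min_eq_left h1]
    have hus : 0 ≤ u * s := by positivity
    have h2 : (u*s) ^ (m+1) ≤ (m+1).factorial * Real.exp (u*s) := by
      have := Real.pow_div_factorial_le_exp (u*s) hus (m+1)
      have hf : (0:ℝ) < (m+1).factorial := by positivity
      rw [div_le_iff₀ hf] at this
      linarith [this]
    have h3 : u ^ (m+1) * s ^ m ≤ (u*s) ^ (m+1) := by
      rw [mul_pow]
      have : s ^ m ≤ s ^ (m+1) := pow_le_pow_right₀ h1 (Nat.le_succ m)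
      nlinarith [pow_pos hu (m+1), pow_pos hs m]
    have key : s ^ m * Real.exp (-u * s) ≤ (m+1).factorial / u ^ (m+1) := by
      rw [neg_mul, Real.exp_neg, ← div_eq_mul_inv,
        div_le_div_iff₀ (Real.exp_pos _) (pow_pos hu _)]
      nlinarith [Real.exp_pos (u*s)]
    calc s ^ m * Real.exp (-u * s) ≤ (m+1).factorial / u ^ (m+1) := key
      _ ≤ max 1 ((m+1).factorial / u ^ (m+1)) * 1 := by
          rw [mul_one]; exact le_max_right _ _

/-- Pointwise convergence, for every `u > 0`, of the integrand `f_ε(u)`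
of the eppf of the ε-approximated normalized CRM to the integrand `f_0(u)` of the eppf
of the limiting normalized CRM, as ε → 0⁺. -/
theorem eppf_integrand_tendsto
    (ρ : ℝ → ℝ) (hρmeas : Measurable ρ) (hρnn : ∀ s ∈ Set.Ioi (0:ℝ), 0 ≤ ρ s)
    (hreg1 : ∫⁻ s in Set.Ioi (0:ℝ), ENNReal.ofReal (min 1 s * ρ s) < ⊤)
    (hreg2 : ∫⁻ s in Set.Ioi (0:ℝ), ENNReal.ofReal (ρ s) = ⊤)
    (κ : ℝ) (hκ : 0 < κ)
    (k : ℕ) (hk : 1 ≤ k) (nv : Fin k → ℕ) (hnv : ∀ i, 1 ≤ nv i)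
    (n : ℕ) (hn : n = ∑ i, nv i)
    (u : ℝ) (hu : 0 < u) :
    Filter.Tendsto
      (fun ε : ℝ =>
        (u ^ (n - 1) / Real.Gamma n) *
          ((k + κ * ∫ s in Set.Ioi ε, Real.exp (-u * s) * ρ s) /
            (κ * ∫ s in Set.Ioi ε, ρ s)) *
          Real.exp ((κ * ∫ s in Set.Ioi ε, Real.exp (-u * s) * ρ s) -
            (κ * ∫ s in Set.Ioi ε, ρ s)) *
          ∏ i, κ * ∫ s in Set.Ioi ε, s ^ (nv i) * Real.exp (-u * s) * ρ s)
      (𝓝[>] (0:ℝ))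
      (𝓝 ((u ^ (n - 1) / Real.Gamma n) *
        Real.exp (κ * ∫ s in Set.Ioi (0:ℝ), (Real.exp (-u * s) - 1) * ρ s) *
        ∏ i, κ * ∫ s in Set.Ioi (0:ℝ), s ^ (nv i) * Real.exp (-u * s) * ρ s)) := by
  -- integrability of min 1 s * ρ s on Ioi 0
  have hmin : IntegrableOn (fun s => min 1 s * ρ s) (Ioi 0) := by
    refine ⟨((measurable_const.min measurable_id).mul hρmeas).aestronglyMeasurable, ?_⟩
    rw [hasFiniteIntegral_iff_norm]
    refine lt_of_eq_of_lt ?_ hreg1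
    refine setLIntegral_congr_fun measurableSet_Ioi (fun s hs => ?_)
    rw [Real.norm_of_nonneg (mul_nonneg (le_min zero_le_one (le_of_lt hs)) (hρnn s hs))]
  -- integrability of the product integrands
  have hg : ∀ i : Fin k,
      IntegrableOn (fun s => s ^ (nv i) * Real.exp (-u*s) * ρ s) (Ioi 0) := by
    intro i
    set C := max 1 (((nv i)+1).factorial / u ^ ((nv i)+1)) with hC
    refine Integrable.mono' (hmin.const_mul C) ?_ ?_
    · exact (((measurable_id.pow_const (nv i)).mul
        (Real.measurable_exp.comp (measurable_id.const_mul (-u)))).mul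
        hρmeas).aestronglyMeasurable
    · rw [ae_restrict_iff' measurableSet_Ioi]
      refine Eventually.of_forall fun s hs => ?_
      have h0 : 0 ≤ ρ s := hρnn s hs
      have hb := aux_pow_exp_bound hu (hnv i) (mem_Ioi.mp hs)
      have hnn : 0 ≤ s ^ (nv i) * Real.exp (-u*s) * ρ s :=
        mul_nonneg (mul_nonneg (pow_nonneg (le_of_lt (mem_Ioi.mp hs)) _)
          (Real.exp_pos _).le) h0
      rw [Real.norm_of_nonneg hnn]
      calc s ^ (nv i) * Real.exp (-u*s) * ρ s ≤ (C * min 1 s) * ρ s := by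
            exact mul_le_mul_of_nonneg_right hb h0
        _ = C * (min 1 s * ρ s) := by ring
  -- integrability of ρ on Ioi ε
  have hρe : ∀ ε : ℝ, 0 < ε → IntegrableOn ρ (Ioi ε) := by
    intro ε hε
    refine Integrable.mono' ((hmin.mono_set (Ioi_subset_Ioi hε.le)).const_mul (min 1 ε)⁻¹)
      hρmeas.aestronglyMeasurable ?_
    rw [ae_restrict_iff' measurableSet_Ioi]
    refine Eventually.of_forall fun s hs => ?_
    have hs0 : 0 < s := lt_trans hε (mem_Ioi.mp hs)
    have h0 : 0 ≤ ρ s := hρnn s hs0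
    rw [Real.norm_of_nonneg h0]
    have hmm : min 1 ε ≤ min 1 s := min_le_min le_rfl (le_of_lt (mem_Ioi.mp hs))
    have hpos : 0 < min 1 ε := lt_min one_pos hε
    calc ρ s = (min 1 ε)⁻¹ * (min 1 ε * ρ s) := by field_simp
      _ ≤ (min 1 ε)⁻¹ * (min 1 s * ρ s) := by
          exact mul_le_mul_of_nonneg_left (mul_le_mul_of_nonneg_right hmm h0)
            (inv_nonneg.mpr hpos.le)
  -- integrability of (exp(-us)-1)ρ on Ioi 0
  have hde : IntegrableOn (fun s => (Real.exp (-u*s) - 1) * ρ s) (Ioi 0) := by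
    refine Integrable.mono' (hmin.const_mul (max 1 u)) ?_ ?_
    · exact (((Real.measurable_exp.comp (measurable_id.const_mul (-u))).sub
        measurable_const).mul hρmeas).aestronglyMeasurable
    · rw [ae_restrict_iff' measurableSet_Ioi]
      refine Eventually.of_forall fun s hs => ?_
      have hs0 : 0 < s := mem_Ioi.mp hs
      have h0 : 0 ≤ ρ s := hρnn s hs
      have he1 : Real.exp (-u*s) ≤ 1 := Real.exp_le_one_iff.2 (by nlinarith)
      have key : 1 - Real.exp (-u*s) ≤ max 1 u * min 1 s := by
        rcases le_total s 1 with h1 | h1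
        · rw [min_eq_right h1]
          have := Real.add_one_le_exp (-u*s)
          have h2 : 1 - Real.exp (-u*s) ≤ u * s := by linarith
          calc 1 - Real.exp (-u*s) ≤ u * s := h2
            _ ≤ max 1 u * s := mul_le_mul_of_nonneg_right (le_max_right _ _) hs0.le
        · rw [min_eq_left h1]
          have : (0:ℝ) < Real.exp (-u*s) := Real.exp_pos _
          calc 1 - Real.exp (-u*s) ≤ 1 := by linarith
            _ ≤ max 1 u * 1 := by rw [mul_one]; exact le_max_left _ _
      rw [Real.norm_eq_abs, abs_mul, abs_of_nonneg h0,
        abs_of_nonpos (by linarith : Real.exp (-u*s) - 1 ≤ 0)]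
      calc -(Real.exp (-u*s) - 1) * ρ s = (1 - Real.exp (-u*s)) * ρ s := by ring
        _ ≤ (max 1 u * min 1 s) * ρ s := mul_le_mul_of_nonneg_right key h0
        _ = max 1 u * (min 1 s * ρ s) := by ring
  -- relation A = L + D on Ioi ε
  have hAL : ∀ ε : ℝ, 0 < ε →
      (∫ s in Ioi ε, Real.exp (-u*s) * ρ s) =
      (∫ s in Ioi ε, ρ s) + ∫ s in Ioi ε, (Real.exp (-u*s) - 1) * ρ s := by
    intro ε hε
    rw [← integral_add (hρe ε hε) (hde.mono_set (Ioi_subset_Ioi hε.le))]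
    exact integral_congr_ae (Eventually.of_forall fun s => by ring)
  -- L tends to atTop
  have hL : Tendsto (fun ε : ℝ => ∫ s in Ioi ε, ρ s) (𝓝[>] (0:ℝ)) atTop := by
    rw [tendsto_atTop]
    intro M
    set μ := volume.withDensity (fun s => ENNReal.ofReal (ρ s)) with hμdef
    have happ : ∀ t : Set ℝ, MeasurableSet t → μ t = ∫⁻ s in t, ENNReal.ofReal (ρ s) :=
      fun t ht => withDensity_apply _ ht
    have hmono : Monotone (fun m : ℕ => Ioi (((m:ℝ)+1)⁻¹)) := by
      intro a b hab
      apply Ioi_subset_Ioi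
      have h1 : (a:ℝ) + 1 ≤ (b:ℝ) + 1 := by exact_mod_cast by omega
      exact inv_anti₀ (by positivity) h1
    have hun : ⋃ m : ℕ, Ioi (((m:ℝ)+1)⁻¹) = Ioi (0:ℝ) := by
      ext x
      simp only [mem_iUnion, mem_Ioi]
      constructor
      · rintro ⟨m, hm⟩; exact lt_trans (by positivity) hm
      · intro hx
        obtain ⟨m, hm⟩ := exists_nat_gt x⁻¹
        refine ⟨m, ?_⟩
        have hxm : x⁻¹ < (m:ℝ) + 1 := lt_trans hm (by linarith)
        exact (inv_lt_comm₀ hx (by positivity)).mp hxm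
    have htend := tendsto_measure_iUnion_atTop (μ := μ) hmono
    rw [hun, happ _ measurableSet_Ioi, hreg2] at htend
    have hev := (htend.eventually (lt_mem_nhds (show ENNReal.ofReal M < ⊤ from
      ENNReal.ofReal_lt_top))).exists
    obtain ⟨m, hm⟩ := hev
    set δ := ((m:ℝ)+1)⁻¹ with hδdef
    have hδ : 0 < δ := by positivity
    have hfin : μ (Ioi δ) ≠ ⊤ := by
      rw [happ _ measurableSet_Ioi]
      refine ne_top_of_le_ne_top ((hasFiniteIntegral_iff_norm ρ).1 (hρe δ hδ).2).ne
        (lintegral_mono fun s => ENNReal.ofReal_le_ofReal ?_)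
      rw [Real.norm_eq_abs]; exact le_abs_self _
    have heq : ∫ s in Ioi δ, ρ s = (μ (Ioi δ)).toReal := by
      rw [happ _ measurableSet_Ioi,
        integral_eq_lintegral_of_nonneg_ae ((ae_restrict_iff' measurableSet_Ioi).2
          (Eventually.of_forall fun s hs => hρnn s (lt_trans hδ (mem_Ioi.mp hs))))
        hρmeas.aestronglyMeasurable]
    have hMδ : M ≤ ∫ s in Ioi δ, ρ s := by
      rw [heq]
      have h1 : M ≤ (ENNReal.ofReal M).toReal := by
        rcases le_total M 0 with h | h
        · exact le_trans h ENNReal.toReal_nonneg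
        · rw [ENNReal.toReal_ofReal h]
      exact le_trans h1 (ENNReal.toReal_mono hfin hm.le)
    filter_upwards [Ioo_mem_nhdsGT_of_mem (left_mem_Ico.mpr hδ)] with ε hε
    refine le_trans hMδ (setIntegral_mono_set (hρe ε hε.1) ?_ ?_)
    · exact (ae_restrict_iff' measurableSet_Ioi).2
        (Eventually.of_forall fun s hs => hρnn s (lt_trans hε.1 (mem_Ioi.mp hs)))
    · exact HasSubset.Subset.eventuallyLE (Ioi_subset_Ioi hε.2.le)
  -- the pieces
  have hDten := aux_tendsto_Ioi hde
  have hLκ : Tendsto (fun ε : ℝ => κ * ∫ s in Ioi ε, ρ s) (𝓝[>] (0:ℝ)) atTop :=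
    hL.const_mul_atTop hκ
  have hR : Tendsto (fun ε : ℝ =>
      ((k:ℝ) + κ * ∫ s in Ioi ε, Real.exp (-u*s) * ρ s) / (κ * ∫ s in Ioi ε, ρ s))
      (𝓝[>] (0:ℝ)) (𝓝 1) := by
    have h0 : Tendsto (fun ε : ℝ =>
        ((k:ℝ) + κ * ∫ s in Ioi ε, (Real.exp (-u*s) - 1) * ρ s) /
          (κ * ∫ s in Ioi ε, ρ s)) (𝓝[>] (0:ℝ)) (𝓝 0) :=
      Tendsto.div_atTop (tendsto_const_nhds.add (hDten.const_mul κ)) hLκ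
    have h1 := tendsto_const_nhds (x := (1:ℝ)) (f := 𝓝[>] (0:ℝ))
    have h2 := h1.add h0
    rw [add_zero] at h2
    refine Tendsto.congr' ?_ h2
    filter_upwards [hLκ.eventually_ge_atTop 1, self_mem_nhdsWithin] with ε h1ε (hε : 0 < ε)
    have hne : κ * ∫ s in Ioi ε, ρ s ≠ 0 := by linarith
    rw [hAL ε hε]
    rw [eq_div_iff hne, add_mul, div_mul_cancel₀ _ hne]
    ring
  have hE : Tendsto (fun ε : ℝ =>
      Real.exp ((κ * ∫ s in Ioi ε, Real.exp (-u*s) * ρ s) - κ * ∫ s in Ioi ε, ρ s))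
      (𝓝[>] (0:ℝ))
      (𝓝 (Real.exp (κ * ∫ s in Ioi (0:ℝ), (Real.exp (-u*s) - 1) * ρ s))) := by
    refine (Real.continuous_exp.tendsto _).comp (Tendsto.congr' ?_ (hDten.const_mul κ))
    filter_upwards [self_mem_nhdsWithin] with ε (hε : 0 < ε)
    rw [hAL ε hε]
    ring
  have hP : Tendsto (fun ε : ℝ =>
      ∏ i, κ * ∫ s in Ioi ε, s ^ (nv i) * Real.exp (-u*s) * ρ s) (𝓝[>] (0:ℝ))
      (𝓝 (∏ i, κ * ∫ s in Ioi (0:ℝ), s ^ (nv i) * Real.exp (-u*s) * ρ s)) :=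
    tendsto_finset_prod _ fun i _ => (aux_tendsto_Ioi (hg i)).const_mul κ
  have final := ((tendsto_const_nhds (x := u ^ (n-1) / Real.Gamma n)).mul hR).mul hE |>.mul hP
  rw [mul_one] at final
  exact final
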